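/- Let s, r ≥ 0 and d ≥ 1 be integers with s + r + d ≥ 2, and suppose that every integer k ≥ 2 dividing both d and s − r − 1 satisfies k ∤ s and k ∤ r. Then for every X ∈ E(s,r,d), the only affine map leaving X invariant is the identity; that is, the isotropy group of every X ∈ E(s,r,d) is trivial. -/
import Mathlib

open Polynomial

noncomputable section

/-- The data `(λ, Q, P, E)` of an element `X ∈ E(s,r,d)`:
`λ ≠ 0`, `Q`, `P` monic of degrees `s`, `r` with no common roots,
and `deg E = d`. -/
def EData (s r d : ℕ) (lam : ℂ) (Q P E : Polynomial ℂ) : Prop :=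
  lam ≠ 0 ∧ Q.Monic ∧ P.Monic ∧ Q.natDegree = s ∧ P.natDegree = r ∧
    E.natDegree = d ∧ ∀ z : ℂ, ¬ (Q.IsRoot z ∧ P.IsRoot z)

/-- The affine map `T(w) = a·w + b` leaves the vector field with data `(λ,Q,P,E)`
invariant: `Q(aw+b)·P(w)·exp(E(aw+b)) = a·Q(w)·P(aw+b)·exp(E(w))` for all `w`. -/
def LeavesInv (Q P E : Polynomial ℂ) (a b : ℂ) : Prop :=
  ∀ w : ℂ,
    Q.eval (a * w + b) * P.eval w * Complex.exp (E.eval (a * w + b)) =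
      a * Q.eval w * P.eval (a * w + b) * Complex.exp (E.eval w)

lemma shift_eq_zero {p : Polynomial ℂ} {b : ℂ} (hp : p.natDegree ≠ 0)
    (h : ∀ w : ℂ, p.eval (w + b) = p.eval w) : b = 0 := by
  by_contra hb
  have hq0 : p - C (p.eval 0) ≠ 0 := by
    intro h0
    rw [sub_eq_zero] at h0
    exact hp (by rw [h0, natDegree_C])
  have key : ∀ n : ℕ, p.eval ((n : ℂ) * b) = p.eval 0 := by
    intro n
    induction n with
    | zero => simp
    | succ n ih =>
      have e : ((n + 1 : ℕ) : ℂ) * b = (n : ℂ) * b + b := by push_cast; ring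
      rw [e, h, ih]
  have hmem : ∀ n : ℕ, ((n : ℂ) * b) ∈ {x | (p - C (p.eval 0)).IsRoot x} := by
    intro n
    simp [IsRoot, key n]
  have hinj : Function.Injective (fun n : ℕ => (n : ℂ) * b) := by
    intro m n hmn
    simp only [mul_eq_mul_right_iff] at hmn
    rcases hmn with h1 | h1
    · exact_mod_cast h1
    · exact absurd h1 hb
  exact (Polynomial.finite_setOf_isRoot hq0).not_infinite
    (Set.infinite_of_injective_forall_mem hinj hmem)

lemma coprime_of_no_common_root {Q P : Polynomial ℂ} (_hQ : Q ≠ 0)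
    (h : ∀ z : ℂ, ¬ (Q.IsRoot z ∧ P.IsRoot z)) : IsCoprime Q P := by
  rw [← gcd_isUnit_iff]
  by_contra hu
  have hdeg : (gcd Q P).degree ≠ 0 := fun hdeg => hu (isUnit_iff_degree_eq_zero.mpr hdeg)
  obtain ⟨z, hz⟩ := IsAlgClosed.exists_root _ hdeg
  exact h z ⟨eval_eq_zero_of_dvd_of_eval_eq_zero (gcd_dvd_left Q P) hz,
    eval_eq_zero_of_dvd_of_eval_eq_zero (gcd_dvd_right Q P) hz⟩

lemma isCoprime_comp {Q P T : Polynomial ℂ} (h : IsCoprime Q P) :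
    IsCoprime (Q.comp T) (P.comp T) := by
  obtain ⟨u, v, huv⟩ := h
  exact ⟨u.comp T, v.comp T, by
    rw [← Polynomial.mul_comp, ← Polynomial.mul_comp, ← Polynomial.add_comp, huv,
      Polynomial.one_comp]⟩

lemma dvd_deg_eq {p q : Polynomial ℂ} (hp : p ≠ 0) (hq : q ≠ 0) (hdvd : p ∣ q)
    (hdeg : q.natDegree = p.natDegree) :
    ∃ u : ℂ, u ≠ 0 ∧ q = C u * p ∧ q.leadingCoeff = u * p.leadingCoeff := by
  obtain ⟨k, hk⟩ := hdvd
  have hk0 : k ≠ 0 := by rintro rfl; rw [mul_zero] at hk; exact hq hk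
  have hdk : k.natDegree = 0 := by
    have h2 := natDegree_mul hp hk0
    rw [← hk, hdeg] at h2
    omega
  refine ⟨k.coeff 0, ?_, ?_, ?_⟩
  · intro h0
    apply hk0
    rw [eq_C_of_natDegree_eq_zero hdk, h0, map_zero]
  · conv_lhs => rw [hk, eq_C_of_natDegree_eq_zero hdk]
    ring
  · rw [hk, leadingCoeff_mul]
    have hkl : k.leadingCoeff = k.coeff 0 := by rw [leadingCoeff, hdk]
    rw [hkl]; ring

/-- if every integer `k ≥ 2` dividing both `d` and `s−r−1`
satisfies `k ∤ s` and `k ∤ r`, then every `X ∈ E(s,r,d)` has trivial isotropy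
group. -/
theorem stmt6 (s r d : ℕ) (hd : 1 ≤ d) (h2 : 2 ≤ s + r + d)
    (hk : ∀ k : ℕ, 2 ≤ k → (k : ℤ) ∣ (d : ℤ) → (k : ℤ) ∣ ((s : ℤ) - r - 1) →
      ¬ k ∣ s ∧ ¬ k ∣ r)
    (lam : ℂ) (Q P E : Polynomial ℂ) (hX : EData s r d lam Q P E)
    (a b : ℂ) (ha : a ≠ 0) (hinv : LeavesInv Q P E a b) :
    a = 1 ∧ b = 0 := by
  obtain ⟨hlam, hQm, hPm, hQd, hPd, hEd, hroot⟩ := hX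
  have hQ0 : Q ≠ 0 := hQm.ne_zero
  have hP0 : P ≠ 0 := hPm.ne_zero
  have hE0 : E ≠ 0 := by intro h0; rw [h0, natDegree_zero] at hEd; omega
  set T : Polynomial ℂ := C a * X + C b with hT
  have hTdeg : T.natDegree = 1 := natDegree_linear ha
  have hTdeg' : T.natDegree ≠ 0 := by rw [hTdeg]; exact one_ne_zero
  have hTlc : T.leadingCoeff = a := leadingCoeff_linear ha
  have hTeval : ∀ w : ℂ, T.eval w = a * w + b := by intro w; simp [hT]
  set A : Polynomial ℂ := Q.comp T * P with hA
  set B : Polynomial ℂ := C a * (Q * P.comp T) with hB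
  set G : Polynomial ℂ := E - E.comp T with hG
  have hQTlc : (Q.comp T).leadingCoeff = a ^ s := by
    rw [leadingCoeff_comp hTdeg', hQm.leadingCoeff, hTlc, one_mul, hQd]
  have hPTlc : (P.comp T).leadingCoeff = a ^ r := by
    rw [leadingCoeff_comp hTdeg', hPm.leadingCoeff, hTlc, one_mul, hPd]
  have hQT0 : Q.comp T ≠ 0 := fun h0 =>
    (pow_ne_zero s ha) (by rw [← hQTlc, h0, leadingCoeff_zero])
  have hPT0 : P.comp T ≠ 0 := fun h0 =>
    (pow_ne_zero r ha) (by rw [← hPTlc, h0, leadingCoeff_zero])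
  have hA0 : A ≠ 0 := by rw [hA]; exact mul_ne_zero hQT0 hP0
  have hB0 : B ≠ 0 := by
    rw [hB]; exact mul_ne_zero (C_ne_zero.mpr ha) (mul_ne_zero hQ0 hPT0)
  have hAeval : ∀ w : ℂ, A.eval w = Q.eval (a * w + b) * P.eval w := by
    intro w; rw [hA, eval_mul, eval_comp, hTeval]
  have hBeval : ∀ w : ℂ, B.eval w = a * (Q.eval w * P.eval (a * w + b)) := by
    intro w; rw [hB, eval_mul, eval_C, eval_mul, eval_comp, hTeval]
  have hGeval : ∀ w : ℂ, G.eval w = E.eval w - E.eval (a * w + b) := by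
    intro w; rw [hG, eval_sub, eval_comp, hTeval]
  -- Step 1: pointwise identity
  have hpt : ∀ w : ℂ, A.eval w = B.eval w * Complex.exp (G.eval w) := by
    intro w
    rw [hAeval, hBeval, hGeval, Complex.exp_sub]
    rw [div_eq_mul_inv, ← mul_assoc, eq_comm, mul_inv_eq_iff_eq_mul₀ (Complex.exp_ne_zero _)]
    linear_combination (hinv w).symm
  -- Step 2-3: polynomial differentiated identity
  have hder : derivative A * B = derivative B * A + derivative G * A * B := by
    apply Polynomial.funext
    intro w
    have h1 : HasDerivAt (fun z : ℂ => B.eval z * Complex.exp (G.eval z))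
        ((derivative B).eval w * Complex.exp (G.eval w)
          + B.eval w * (Complex.exp (G.eval w) * (derivative G).eval w)) w := by
      have hB' : HasDerivAt (fun z : ℂ => B.eval z) ((derivative B).eval w) w := by
        simpa using B.hasDerivAt w
      have hG' : HasDerivAt (fun z : ℂ => G.eval z) ((derivative G).eval w) w := by
        simpa using G.hasDerivAt w
      exact hB'.mul hG'.cexp
    have h2 : HasDerivAt (fun z : ℂ => B.eval z * Complex.exp (G.eval z))
        ((derivative A).eval w) w := by
      have he : (fun z : ℂ => B.eval z * Complex.exp (G.eval z)) = fun z => A.eval z :=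
        funext fun z => (hpt z).symm
      rw [he]
      simpa using A.hasDerivAt w
    have h3 := h2.unique h1
    simp only [eval_mul, eval_add]
    linear_combination B.eval w * h3 -
      ((derivative B).eval w + (derivative G).eval w * B.eval w) * (hpt w)
  -- Step 4: G has zero derivative
  have hG' : derivative G = 0 := by
    by_contra hne
    have hP1ne : derivative G * A * B ≠ 0 := mul_ne_zero (mul_ne_zero hne hA0) hB0
    have heq : derivative G * A * B = derivative A * B - derivative B * A := by
      linear_combination -hder
    have hge : A.natDegree + B.natDegree ≤ (derivative G * A * B).natDegree := by
      rw [natDegree_mul (mul_ne_zero hne hA0) hB0, natDegree_mul hne hA0]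
      omega
    have hbA : (derivative A * B).natDegree + 1 ≤ A.natDegree + B.natDegree
        ∨ derivative A * B = 0 := by
      by_cases h0 : derivative A = 0
      · right; rw [h0, zero_mul]
      · left
        have h1 : A.natDegree ≠ 0 := fun h =>
          h0 (by rw [eq_C_of_natDegree_eq_zero h, derivative_C])
        have hle2 : (derivative A).natDegree ≤ A.natDegree - 1 := natDegree_derivative_le A
        rw [natDegree_mul h0 hB0]
        omega
    have hbB : (derivative B * A).natDegree + 1 ≤ A.natDegree + B.natDegree
        ∨ derivative B * A = 0 := by
      by_cases h0 : derivative B = 0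
      · right; rw [h0, zero_mul]
      · left
        have h1 : B.natDegree ≠ 0 := fun h =>
          h0 (by rw [eq_C_of_natDegree_eq_zero h, derivative_C])
        have hle2 : (derivative B).natDegree ≤ B.natDegree - 1 := natDegree_derivative_le B
        rw [natDegree_mul h0 hA0]
        omega
    have hle : (derivative G * A * B).natDegree
        ≤ max (derivative A * B).natDegree (derivative B * A).natDegree := by
      rw [heq]; exact natDegree_sub_le _ _
    rcases hbA with h1 | h1 <;> rcases hbB with h2 | h2
    · rcases le_max_iff.mp hle with h3 | h3 <;> omega
    · rw [h2, sub_zero] at heq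
      rw [heq] at hge
      omega
    · rw [h1, zero_sub] at heq
      rw [heq, natDegree_neg] at hge
      omega
    · rw [h1, h2, sub_zero] at heq
      exact hP1ne heq
  obtain ⟨g0, hGC⟩ : ∃ c : ℂ, G = C c := ⟨_, eq_C_of_derivative_eq_zero hG'⟩
  have hGe : ∀ w : ℂ, G.eval w = g0 := fun w => by rw [hGC, eval_C]
  -- Step 6: polynomial identity
  set c : ℂ := a * Complex.exp g0 with hc
  have hc0 : c ≠ 0 := mul_ne_zero ha (Complex.exp_ne_zero _)
  have hpt2 : ∀ w : ℂ, Q.eval (a * w + b) * P.eval w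
      = a * (Q.eval w * P.eval (a * w + b)) * Complex.exp g0 := by
    intro w
    have h1 := hpt w
    rw [hAeval, hBeval, hGe] at h1
    exact h1
  have hpoly : Q.comp T * P = C c * (Q * P.comp T) := by
    apply Polynomial.funext
    intro w
    simp only [eval_mul, eval_C, eval_comp, hTeval]
    rw [hc]
    linear_combination hpt2 w
  -- Step 7: coprimality
  have hcop : IsCoprime Q P :=
    coprime_of_no_common_root hQ0 (fun z hz => hroot z hz)
  have hcopT : IsCoprime (Q.comp T) (P.comp T) := isCoprime_comp hcop
  -- Step 8
  have hQT : Q.comp T = C (a ^ s) * Q := by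
    have hdvd : Q.comp T ∣ C c * Q :=
      hcopT.dvd_of_dvd_mul_right ⟨P, by linear_combination -hpoly⟩
    have hqne : C c * Q ≠ 0 := mul_ne_zero (C_ne_zero.mpr hc0) hQ0
    have hdeg : (C c * Q).natDegree = (Q.comp T).natDegree := by
      rw [natDegree_mul (C_ne_zero.mpr hc0) hQ0, natDegree_C, natDegree_comp, hTdeg, mul_one]
      omega
    obtain ⟨v, hv0, hv1, hv2⟩ := dvd_deg_eq hQT0 hqne hdvd hdeg
    rw [leadingCoeff_mul, leadingCoeff_C, hQm.leadingCoeff, mul_one, hQTlc] at hv2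
    apply mul_left_cancel₀ (show (C v : Polynomial ℂ) ≠ 0 from C_ne_zero.mpr hv0)
    rw [← hv1, hv2, C_mul]
    ring
  have hPT : P.comp T = C (a ^ r) * P := by
    have hdvd : P.comp T ∣ P :=
      hcopT.symm.dvd_of_dvd_mul_left ⟨C c * Q, by linear_combination hpoly⟩
    have hdeg : P.natDegree = (P.comp T).natDegree := by
      rw [natDegree_comp, hTdeg, mul_one]
    obtain ⟨v, hv0, hv1, hv2⟩ := dvd_deg_eq hPT0 hP0 hdvd hdeg
    rw [hPm.leadingCoeff, hPTlc] at hv2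
    apply mul_left_cancel₀ (show (C v : Polynomial ℂ) ≠ 0 from C_ne_zero.mpr hv0)
    rw [← hv1, ← mul_assoc, ← C_mul, ← hv2, C_1, one_mul]
  -- Step 9
  have hkey : a ^ s = c * a ^ r := by
    have h1 : C (a ^ s) * (Q * P) = C (c * a ^ r) * (Q * P) := by
      have h4 := hpoly
      rw [hQT, hPT, hc, C_mul] at h4
      rw [hc, C_mul, C_mul]
      linear_combination h4
    have h5 := mul_right_cancel₀ (mul_ne_zero hQ0 hP0) h1
    exact C_injective h5
  -- Step 10 : a ^ d = 1
  have had : a ^ d = 1 := by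
    have h1 : G.coeff d = 0 := by
      rw [hGC, coeff_C, if_neg (by omega : ¬ d = 0)]
    have hET : (E.comp T).natDegree = d := by
      rw [natDegree_comp, hTdeg, hEd, mul_one]
    have hETc : (E.comp T).coeff d = E.leadingCoeff * a ^ d := by
      rw [← hET, ← leadingCoeff, leadingCoeff_comp hTdeg', hTlc, hEd, hET]
    have h3 : G.coeff d = E.leadingCoeff - E.leadingCoeff * a ^ d := by
      rw [hG, coeff_sub, hETc, ← hEd, ← leadingCoeff]
    have hlc : E.leadingCoeff ≠ 0 := leadingCoeff_ne_zero.mpr hE0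
    rw [h1] at h3
    have h4 : E.leadingCoeff * (1 - a ^ d) = 0 := by linear_combination -h3
    rcases mul_eq_zero.mp h4 with h5 | h5
    · exact absurd h5 hlc
    · linear_combination -h5
  by_cases ha1 : a = 1
  · subst ha1
    refine ⟨rfl, ?_⟩
    rcases (by omega : 1 ≤ s ∨ 1 ≤ r ∨ 2 ≤ d) with hs | hr | hd2
    · apply shift_eq_zero (p := Q) (by rw [hQd]; omega)
      intro w
      have h1 := congrArg (eval w) hQT
      rw [eval_comp, hTeval] at h1
      simpa using h1
    · apply shift_eq_zero (p := P) (by rw [hPd]; omega)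
      intro w
      have h1 := congrArg (eval w) hPT
      rw [eval_comp, hTeval] at h1
      simpa using h1
    · -- use the derivative of E
      have hET : E.comp T = E - C g0 := by
        have h1 : E - E.comp T = C g0 := hG ▸ hGC
        linear_combination -h1
      have hdE : (derivative E).comp T = derivative E := by
        have h1 := congrArg derivative hET
        rw [derivative_comp, derivative_sub, derivative_C, sub_zero] at h1
        have hdT : derivative T = 1 := by
          rw [hT]; simp
        rw [hdT, one_mul] at h1
        exact h1
      have hdE0 : (derivative E).natDegree ≠ 0 := by
        intro h0
        have h5 : (derivative E).coeff (d - 1) = 0 := by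
          apply coeff_eq_zero_of_natDegree_lt
          omega
        rw [coeff_derivative] at h5
        have h6 : (d - 1 + 1) = d := by omega
        rw [h6] at h5
        have h7 : E.coeff d ≠ 0 := by
          rw [← hEd, ← leadingCoeff]
          exact leadingCoeff_ne_zero.mpr hE0
        have h8 : ((d - 1 : ℕ) : ℂ) + 1 ≠ 0 := by
          have : ((d - 1 : ℕ) : ℂ) + 1 = ((d - 1 + 1 : ℕ) : ℂ) := by push_cast; ring
          rw [this, h6]
          exact_mod_cast (by omega : d ≠ 0)
        exact (mul_ne_zero h7 h8) h5
      apply shift_eq_zero (p := derivative E) hdE0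
      intro w
      have h1 := congrArg (eval w) hdE
      rw [eval_comp, hTeval] at h1
      simpa using h1
  · exfalso
    set z0 : ℂ := b / (1 - a) with hz0def
    have h1a : (1 : ℂ) - a ≠ 0 := sub_ne_zero.mpr (Ne.symm ha1)
    have hfix : a * z0 + b = z0 := by
      rw [hz0def]
      field_simp
      ring
    have hg0 : g0 = 0 := by
      have h1 := hGe z0
      rw [hGeval, hfix, sub_self] at h1
      exact h1.symm
    rw [hc, hg0, Complex.exp_zero, mul_one] at hkey
    -- hkey : a ^ s = a * a ^ r
    set u : ℂˣ := Units.mk0 a ha with hu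
    have hua : (u : ℂ) = a := rfl
    have hud : u ^ d = 1 := by
      ext
      rw [Units.val_pow_eq_pow_val, hua, had, Units.val_one]
    have hfin : IsOfFinOrder u := isOfFinOrder_iff_pow_eq_one.mpr ⟨d, by omega, hud⟩
    set m : ℕ := orderOf u with hm
    have hm2 : 2 ≤ m := by
      have h1 : m ≠ 0 := by
        have := hfin.orderOf_pos
        omega
      have h3 : m ≠ 1 := by
        intro h4
        apply ha1
        have h5 : u = 1 := orderOf_eq_one_iff.mp h4
        rw [← hua, h5, Units.val_one]
      omega
    have hmd : (m : ℤ) ∣ (d : ℤ) :=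
      Int.natCast_dvd_natCast.mpr (orderOf_dvd_of_pow_eq_one hud)
    have hmsr : (m : ℤ) ∣ ((s : ℤ) - r - 1) := by
      rw [orderOf_dvd_iff_zpow_eq_one]
      have h3 : u ^ (s : ℤ) = u ^ ((r : ℤ) + 1) := by
        ext
        rw [Units.val_zpow_eq_zpow_val, Units.val_zpow_eq_zpow_val, hua]
        rw [zpow_natCast]
        have : ((r : ℤ) + 1) = ((r + 1 : ℕ) : ℤ) := by push_cast; ring
        rw [this, zpow_natCast, hkey, pow_succ]
        ring
      have h4 : (s : ℤ) - r - 1 = (s : ℤ) - ((r : ℤ) + 1) := by ring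
      rw [h4, zpow_sub, h3]
      simp
    obtain ⟨hns, hnr⟩ := hk m hm2 hmd hmsr
    by_cases hQz : Q.eval z0 = 0
    · have hPz : P.eval z0 ≠ 0 := fun h => hroot z0 ⟨hQz, h⟩
      have h4 : P.eval z0 = a ^ r * P.eval z0 := by
        have h5 := congrArg (eval z0) hPT
        rw [eval_comp, hTeval, hfix, eval_mul, eval_C] at h5
        exact h5
      have h5 : a ^ r = 1 :=
        mul_right_cancel₀ hPz (by linear_combination -h4)
      apply hnr
      apply orderOf_dvd_of_pow_eq_one (n := r)
      ext
      rw [Units.val_pow_eq_pow_val, hua, h5, Units.val_one]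
    · have h4 : Q.eval z0 = a ^ s * Q.eval z0 := by
        have h5 := congrArg (eval z0) hQT
        rw [eval_comp, hTeval, hfix, eval_mul, eval_C] at h5
        exact h5
      have h5 : a ^ s = 1 :=
        mul_right_cancel₀ hQz (by linear_combination -h4)
      apply hns
      apply orderOf_dvd_of_pow_eq_one (n := s)
      ext
      rw [Units.val_pow_eq_pow_val, hua, h5, Units.val_one]
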